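/- Let N ≥ 1 be an integer and let (K_m)_{m≥1} be a decreasing sequence (K_{m+1} ⊆ K_m) of nonempty compact subsets of ℝ^d, each of which is the convex hull of at most N points. Then the intersection ⋂_{m≥1} K_m is the convex hull of at most N points; in particular it is a nonempty compact convex set with at most N extreme points. -/

import Mathlib

open Filter Topology

/-- The convex hull of the range of `g : Fin N → ℝ^d` is the image of the standard
simplex under the map sending weights `w` to `∑ i, w i • g i`. -/
lemma hull_range_eq_image_stdSimplex {d N : ℕ} (g : Fin N → (Fin d → ℝ)) :
    convexHull ℝ (Set.range g) =
      (fun w : Fin N → ℝ => ∑ i, w i • g i) '' stdSimplex ℝ (Fin N) := by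
  let L : (Fin N → ℝ) →ₗ[ℝ] (Fin d → ℝ) :=
    ∑ i, (LinearMap.proj i).smulRight (g i)
  have hL : ∀ w, L w = ∑ i, w i • g i := by
    intro w
    simp [L, LinearMap.sum_apply]
  have hbasis : ∀ i : Fin N, L (fun j => if i = j then (1 : ℝ) else 0) = g i := by
    intro i
    rw [hL]
    simp [ite_smul]
  have h1 : Set.range g
      = L '' (Set.range fun i j : Fin N => if i = j then (1 : ℝ) else 0) := by
    rw [← Set.range_comp]
    exact congrArg Set.range (funext fun i => (hbasis i).symm)
  have h2 : convexHull ℝ (Set.range fun i j : Fin N => if i = j then (1 : ℝ) else 0)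
      = stdSimplex ℝ (Fin N) := by
    convert convexHull_basis_eq_stdSimplex (Fin N) (R := ℝ) using 2
  rw [h1, ← LinearMap.image_convexHull, h2]
  exact Set.image_congr fun w _ => hL w

/-- A surjection from `Fin N` onto a nonempty finset of size `≤ N`. -/
lemma exists_enum_of_finset {E : Type*} (S : Finset E) (hS : S.Nonempty) {N : ℕ}
    (hcard : S.card ≤ N) : ∃ e : Fin N → E, Set.range e = ↑S := by
  classical
  obtain ⟨t0, ht0⟩ := hS
  refine ⟨fun i => S.toList.getD i t0, ?_⟩
  have hlen : S.toList.length = S.card := Finset.length_toList S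
  ext y
  constructor
  · rintro ⟨i, rfl⟩
    show S.toList.getD (↑i) t0 ∈ (S : Set E)
    by_cases h : (i : ℕ) < S.toList.length
    · rw [List.getD_eq_getElem _ _ h]
      exact Finset.mem_coe.mpr (Finset.mem_toList.mp (S.toList.getElem_mem h))
    · rw [List.getD_eq_default _ _ (le_of_not_gt h)]
      exact ht0
  · intro hy
    have hyl : y ∈ S.toList := Finset.mem_toList.mpr hy
    obtain ⟨i, hi, hiy⟩ := List.mem_iff_getElem.mp hyl
    refine ⟨⟨i, lt_of_lt_of_le (hlen ▸ hi) hcard⟩, ?_⟩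
    show S.toList.getD i t0 = y
    rw [List.getD_eq_getElem _ _ hi]
    exact hiy

/-- A decreasing sequence `(K_m)_{m ≥ 1}` of nonempty compact subsets of `ℝ^d`, each the
convex hull of at most `N` points, has intersection which is again the convex hull of at
most `N` points; in particular it is a nonempty compact convex set with at most `N`
extreme points. -/
theorem iInter_of_decreasing_hulls {d N : ℕ} (hN : 1 ≤ N)
    (K : ℕ → Set (Fin d → ℝ))
    (hne : ∀ m, 1 ≤ m → (K m).Nonempty)
    (hcomp : ∀ m, 1 ≤ m → IsCompact (K m))
    (hhull : ∀ m, 1 ≤ m → ∃ S : Finset (Fin d → ℝ), S.card ≤ N ∧ K m = convexHull ℝ ↑S)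
    (hdec : ∀ m, 1 ≤ m → K (m + 1) ⊆ K m) :
    (∃ S : Finset (Fin d → ℝ), S.card ≤ N ∧
        (⋂ (m : ℕ) (_ : 1 ≤ m), K m) = convexHull ℝ ↑S) ∧
      (⋂ (m : ℕ) (_ : 1 ≤ m), K m).Nonempty ∧
      IsCompact (⋂ (m : ℕ) (_ : 1 ≤ m), K m) ∧
      Convex ℝ (⋂ (m : ℕ) (_ : 1 ≤ m), K m) ∧
      ∃ T : Finset (Fin d → ℝ), T.card ≤ N ∧
        Set.extremePoints ℝ (⋂ (m : ℕ) (_ : 1 ≤ m), K m) ⊆ ↑T := by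
  classical
  -- monotonicity
  have hmono : ∀ a b : ℕ, 1 ≤ a → a ≤ b → K b ⊆ K a := by
    intro a b ha hab
    induction b, hab using Nat.le_induction with
    | base => exact subset_rfl
    | succ n hn ih => exact (hdec n (le_trans ha hn)).trans ih
  -- choose vertex sets
  choose S hScard hShull using fun n : ℕ => hhull (n + 1) (Nat.le_add_left 1 n)
  have hSne : ∀ n, (S n).Nonempty := by
    intro n
    rcases Finset.eq_empty_or_nonempty (S n) with h | h
    · exfalso
      obtain ⟨x, hx⟩ := hne (n + 1) (Nat.le_add_left 1 n)
      rw [hShull n, h] at hx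
      simp at hx
    · exact h
  choose e he using fun n => exists_enum_of_finset (S n) (hSne n) (hScard n)
  have hKe : ∀ n, K (n + 1) = convexHull ℝ (Set.range (e n)) := by
    intro n; rw [hShull n, he n]
  have heK : ∀ n i, e n i ∈ K (n + 1) := by
    intro n i
    rw [hKe n]
    exact subset_convexHull ℝ _ ⟨i, rfl⟩
  -- the points lie in the compact set K 1
  have heK1 : ∀ n i, e n i ∈ K 1 := fun n i =>
    hmono 1 (n + 1) le_rfl (Nat.le_add_left 1 n) (heK n i)
  -- extract a convergent subsequence of vertex tuples
  have hCcomp : IsCompact (Set.univ.pi fun _ : Fin N => K 1) :=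
    isCompact_univ_pi fun _ => hcomp 1 le_rfl
  obtain ⟨f, -, φ, hφ, hconv⟩ := hCcomp.tendsto_subseq
    (x := fun n => e n) (fun n => Set.mem_univ_pi.mpr fun i => heK1 n i)
  have hci : ∀ i, Tendsto (fun k => e (φ k) i) atTop (𝓝 (f i)) := by
    intro i
    exact (tendsto_pi_nhds.mp hconv) i
  -- each limit point is in the intersection
  have hf : ∀ i, f i ∈ ⋂ (m : ℕ) (_ : 1 ≤ m), K m := by
    intro i
    refine Set.mem_iInter₂.mpr fun m hm => ?_
    refine (hcomp m hm).isClosed.mem_of_tendsto (hci i) ?_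
    filter_upwards [Filter.eventually_ge_atTop m] with k hk
    exact hmono m (φ k + 1) hm (le_trans hk (le_trans hφ.le_apply (Nat.le_succ _)))
      (heK (φ k) i)
  set I := ⋂ (m : ℕ) (_ : 1 ≤ m), K m with hI
  -- convexity of the intersection
  have hconvex : Convex ℝ I := by
    refine convex_iInter fun m => convex_iInter fun hm => ?_
    obtain ⟨T, -, hT⟩ := hhull m hm
    rw [hT]
    exact convex_convexHull ℝ _
  -- the key identity
  have hkey : I = convexHull ℝ (Set.range f) := by
    apply Set.Subset.antisymm
    · intro x hx
      -- x belongs to every K (φ k + 1)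
      have hxk : ∀ k, ∃ w ∈ stdSimplex ℝ (Fin N), ∑ i, w i • e (φ k) i = x := by
        intro k
        have : x ∈ K (φ k + 1) := Set.mem_iInter₂.mp hx _ (Nat.le_add_left 1 _)
        rw [hKe, hull_range_eq_image_stdSimplex] at this
        obtain ⟨w, hw, hwx⟩ := this
        exact ⟨w, hw, hwx⟩
      choose w hw hwx using hxk
      obtain ⟨winf, hwinf, ψ, hψ, hwconv⟩ :=
        (isCompact_stdSimplex ℝ (Fin N)).tendsto_subseq hw
      have hwi : ∀ i, Tendsto (fun k => w (ψ k) i) atTop (𝓝 (winf i)) := fun i =>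
        (tendsto_pi_nhds.mp hwconv) i
      have hei : ∀ i, Tendsto (fun k => e (φ (ψ k)) i) atTop (𝓝 (f i)) := fun i =>
        (hci i).comp hψ.tendsto_atTop
      have hsum : Tendsto (fun k => ∑ i, w (ψ k) i • e (φ (ψ k)) i) atTop
          (𝓝 (∑ i, winf i • f i)) :=
        tendsto_finset_sum _ fun i _ => (hwi i).smul (hei i)
      have hconst : Tendsto (fun k => ∑ i, w (ψ k) i • e (φ (ψ k)) i) atTop (𝓝 x) := by
        simp only [hwx]
        exact tendsto_const_nhds
      have hx' : x = ∑ i, winf i • f i := tendsto_nhds_unique hconst hsum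
      rw [hull_range_eq_image_stdSimplex]
      exact ⟨winf, hwinf, hx'.symm⟩
    · exact convexHull_min (Set.range_subset_iff.mpr hf) hconvex
  -- assemble the conclusions
  have hSfin : (Finset.image f Finset.univ : Set (Fin d → ℝ)) = Set.range f := by
    rw [Finset.coe_image, Finset.coe_univ, Set.image_univ]
  have hcard : (Finset.image f Finset.univ).card ≤ N := by
    calc (Finset.image f Finset.univ).card ≤ Finset.univ.card := Finset.card_image_le
    _ = N := Finset.card_fin N
  refine ⟨⟨Finset.image f Finset.univ, hcard, by rw [hSfin]; exact hkey⟩, ?_, ?_, hconvex, ?_⟩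
  · exact ⟨f ⟨0, hN⟩, hf ⟨0, hN⟩⟩
  · rw [hkey]
    exact (Set.finite_range f).isCompact_convexHull (𝕜 := ℝ)
  · refine ⟨Finset.image f Finset.univ, hcard, ?_⟩
    rw [hkey, ← hSfin]
    exact extremePoints_convexHull_subset
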